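/- One has lim_{ε → 0+} ∫₀^{1/2} ( y/(ε + y²) ) · ( (−log y)/(log(ε + y²))² ) · log(1 + ε/y²) dy = 0. -/

import Mathlib

open MeasureTheory Filter Set Topology

set_option maxHeartbeats 1000000


private lemma log_one_add_le_sqrt {t : ℝ} (ht : 0 ≤ t) :
    Real.log (1 + t) ≤ Real.sqrt t := by
  have hs : 0 ≤ Real.sqrt t := Real.sqrt_nonneg t
  have h2 : Real.sqrt t ^ 2 = t := Real.sq_sqrt ht
  rw [Real.log_le_iff_le_exp (by linarith)]
  have h := Real.sum_le_exp_of_nonneg hs 4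
  have hsum : ∑ i ∈ Finset.range 4, Real.sqrt t ^ i / (Nat.factorial i) =
      1 + Real.sqrt t + Real.sqrt t ^ 2 / 2 + Real.sqrt t ^ 3 / 6 := by
    norm_num [Finset.sum_range_succ, Nat.factorial]
  rw [hsum] at h
  nlinarith [sq_nonneg (Real.sqrt t - 3/2)]

private lemma neg_log_le_four_div {y : ℝ} (hy : 0 < y) :
    -Real.log y ≤ 4 / Real.sqrt (Real.sqrt y) := by
  have hr : 0 < Real.sqrt (Real.sqrt y) := Real.sqrt_pos.2 (Real.sqrt_pos.2 hy)
  have h1 : Real.log y = 4 * Real.log (Real.sqrt (Real.sqrt y)) := by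
    rw [Real.log_sqrt (Real.sqrt_nonneg y), Real.log_sqrt hy.le]; ring
  have h2 := Real.log_le_sub_one_of_pos (inv_pos.2 hr)
  rw [Real.log_inv] at h2
  rw [h1, div_eq_mul_inv]
  nlinarith [inv_pos.2 hr]

private noncomputable def Fint (ε y : ℝ) : ℝ :=
  (y / (ε + y ^ 2)) * ((-Real.log y) / (Real.log (ε + y ^ 2)) ^ 2)
    * Real.log (1 + ε / y ^ 2)

private lemma Fint_nonneg {ε y : ℝ} (hε : 0 < ε) (hy0 : 0 < y) (hy1 : y ≤ 1) :
    0 ≤ Fint ε y := by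
  have h1 : 0 ≤ y / (ε + y ^ 2) := by positivity
  have h2 : 0 ≤ -Real.log y := by
    have := Real.log_nonpos hy0.le hy1
    linarith
  have h3 : 0 ≤ Real.log (1 + ε / y ^ 2) :=
    Real.log_nonneg (le_add_of_nonneg_right (by positivity))
  exact mul_nonneg (mul_nonneg h1 (div_nonneg h2 (sq_nonneg _))) h3

/-- facts about `L = -log (2ε)` used in regions 1 and 2. -/
private lemma L_facts {ε : ℝ} (hε0 : 0 < ε) (hε16 : ε ≤ 1/16) :
    1 ≤ -Real.log (2*ε) ∧ (-Real.log ε) / 2 ≤ -Real.log (2*ε) ∧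
      2 ≤ -Real.log ε := by
  have hlog2 : (0.6931:ℝ) < Real.log 2 := by
    have := Real.log_two_gt_d9; linarith
  have h1 : Real.log ε ≤ Real.log (1/16) := (Real.log_le_log_iff hε0 (by norm_num)).2 hε16
  have h2 : Real.log (1/16 : ℝ) = -(4 * Real.log 2) := by
    rw [show (1/16:ℝ) = (2^4)⁻¹ by norm_num, Real.log_inv, Real.log_pow]
    push_cast; ring
  have hX : 4 * Real.log 2 ≤ -Real.log ε := by rw [h2] at h1; linarith
  have hL : -Real.log (2*ε) = -Real.log ε - Real.log 2 := by
    rw [Real.log_mul two_ne_zero hε0.ne']; ring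
  refine ⟨by rw [hL]; linarith, by rw [hL]; linarith, by linarith⟩

/-- square comparison for the denominator, regions 1 and 2 (`0 < y ≤ √ε`). -/
private lemma Lsq_le {ε y : ℝ} (hε0 : 0 < ε) (hε16 : ε ≤ 1/16) (hy0 : 0 < y)
    (hys : y ^ 2 ≤ ε) :
    (-Real.log (2*ε))^2 ≤ (Real.log (ε + y ^ 2)) ^ 2 ∧ Real.log (ε + y^2) ≤ 0 := by
  obtain ⟨hL1, -, -⟩ := L_facts hε0 hε16
  have hpos : 0 < ε + y ^ 2 := by positivity
  have h1 : Real.log (ε + y ^ 2) ≤ Real.log (2 * ε) :=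
    (Real.log_le_log_iff hpos (by linarith)).2 (by linarith)
  constructor
  · nlinarith [sq_nonneg (Real.log (ε + y ^ 2) + (-Real.log (2*ε)))]
  · linarith

private lemma bound1 {ε y : ℝ} (hε0 : 0 < ε) (hε16 : ε ≤ 1/16)
    (hy0 : 0 < y) (hyε : y ≤ ε) :
    Fint ε y ≤ 32 / (Real.sqrt ε * (-Real.log (2*ε))^2) := by
  obtain ⟨hL1, -, -⟩ := L_facts hε0 hε16
  set L : ℝ := -Real.log (2*ε) with hLdef
  have hs0 : 0 < Real.sqrt ε := Real.sqrt_pos.2 hε0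
  have hy2ε : y ^ 2 ≤ ε := by nlinarith
  obtain ⟨hLsq', hlogneg⟩ := Lsq_le hε0 hε16 hy0 hy2ε
  have hLsq : L ^ 2 ≤ (Real.log (ε + y ^ 2)) ^ 2 := hLsq'
  have hnl0 : 0 ≤ -Real.log y := by
    have := Real.log_nonpos hy0.le (by linarith); linarith
  -- factor bounds
  have hA : y / (ε + y ^ 2) ≤ y / ε := by
    rw [div_le_div_iff₀ (by positivity) hε0]
    nlinarith [sq_nonneg y]
  have hden : 0 < (Real.log (ε + y ^ 2)) ^ 2 := by nlinarith
  have hB : (-Real.log y) / (Real.log (ε + y ^ 2)) ^ 2 ≤ (-Real.log y) / L^2 := by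
    rw [div_le_div_iff₀ hden (by positivity)]
    nlinarith [mul_le_mul_of_nonneg_left hLsq hnl0]
  have hC : Real.log (1 + ε / y ^ 2) ≤ 2 * (-Real.log y) := by
    have hid : 1 + ε / y ^ 2 = (ε + y ^ 2) / y ^ 2 := by
      field_simp
      ring
    have hne1 : (ε + y ^ 2) ≠ 0 := by positivity
    have hne2 : (y ^ 2 : ℝ) ≠ 0 := by positivity
    rw [hid, Real.log_div hne1 hne2]
    have hp : Real.log (y ^ 2) = 2 * Real.log y := by
      rw [Real.log_pow]; norm_num
    rw [hp]; linarith
  -- nonnegativity of factors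
  have hA0 : 0 ≤ y / (ε + y ^ 2) := by positivity
  have hB0 : 0 ≤ (-Real.log y) / (Real.log (ε + y ^ 2)) ^ 2 := by positivity
  have hC0 : 0 ≤ Real.log (1 + ε / y ^ 2) :=
    Real.log_nonneg (le_add_of_nonneg_right (by positivity))
  have hA'0 : 0 ≤ y / ε := by positivity
  have hB'0 : 0 ≤ (-Real.log y) / L^2 := by positivity
  have step1 : Fint ε y ≤ (y / ε) * ((-Real.log y) / L^2) * (2 * (-Real.log y)) := by
    exact mul_le_mul (mul_le_mul hA hB hB0 hA'0) hC hC0 (mul_nonneg hA'0 hB'0)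
  -- key: y * (-log y)^2 ≤ 16 * √ε
  have hyl : y * (-Real.log y)^2 ≤ 16 * Real.sqrt ε := by
    set r : ℝ := Real.sqrt (Real.sqrt y) with hrdef
    have hry : 0 < Real.sqrt y := Real.sqrt_pos.2 hy0
    have hr0 : 0 < r := Real.sqrt_pos.2 hry
    have hr2 : r ^ 2 = Real.sqrt y := Real.sq_sqrt (Real.sqrt_nonneg y)
    have hy4 : Real.sqrt y ^ 2 = y := Real.sq_sqrt hy0.le
    have h4 : (-Real.log y) * r ≤ 4 := by
      have := neg_log_le_four_div hy0
      rw [← hrdef] at this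
      calc (-Real.log y) * r ≤ (4 / r) * r := mul_le_mul_of_nonneg_right this hr0.le
        _ = 4 := by field_simp
    have hsy : Real.sqrt y ≤ Real.sqrt ε := Real.sqrt_le_sqrt hyε
    nlinarith [mul_le_mul h4 h4 (by positivity) (by norm_num), sq_nonneg r, hry.le]
  have step2 : (y / ε) * ((-Real.log y) / L^2) * (2 * (-Real.log y))
      ≤ 32 / (Real.sqrt ε * L^2) := by
    have heq : (y / ε) * ((-Real.log y) / L^2) * (2 * (-Real.log y))
        = (2 * (y * (-Real.log y)^2)) / (ε * L^2) := by
      field_simp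
    rw [heq, div_le_div_iff₀ (by positivity) (by positivity)]
    have hs2 : Real.sqrt ε ^ 2 = ε := Real.sq_sqrt hε0.le
    nlinarith [mul_le_mul_of_nonneg_right hyl (mul_nonneg hs0.le (sq_nonneg L)), hs2]
  exact le_trans step1 step2

private lemma bound2 {ε y : ℝ} (hε0 : 0 < ε) (hε16 : ε ≤ 1/16)
    (hεy : ε < y) (hys : y ≤ Real.sqrt ε) :
    Fint ε y ≤ (-Real.log ε) / (Real.sqrt ε * (-Real.log (2*ε))^2) := by
  obtain ⟨hL1, -, hX2⟩ := L_facts hε0 hε16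
  set L : ℝ := -Real.log (2*ε) with hLdef
  set s : ℝ := Real.sqrt ε with hsdef
  have hy0 : 0 < y := lt_trans hε0 hεy
  have hs0 : 0 < s := Real.sqrt_pos.2 hε0
  have hs2 : s ^ 2 = ε := Real.sq_sqrt hε0.le
  have hy2ε : y ^ 2 ≤ ε := by nlinarith
  obtain ⟨hLsq', hlogneg⟩ := Lsq_le hε0 hε16 hy0 hy2ε
  have hLsq : L ^ 2 ≤ (Real.log (ε + y ^ 2)) ^ 2 := hLsq'
  have hnl0 : 0 ≤ -Real.log y := by
    have := Real.log_nonpos hy0.le (by nlinarith); linarith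
  have hA : y / (ε + y ^ 2) ≤ y / ε := by
    rw [div_le_div_iff₀ (by positivity) hε0]
    nlinarith [sq_nonneg y]
  have hden : 0 < (Real.log (ε + y ^ 2)) ^ 2 := by nlinarith
  have hB : (-Real.log y) / (Real.log (ε + y ^ 2)) ^ 2 ≤ (-Real.log y) / L^2 := by
    rw [div_le_div_iff₀ hden (by positivity)]
    nlinarith [mul_le_mul_of_nonneg_left hLsq hnl0]
  have hC : Real.log (1 + ε / y ^ 2) ≤ s / y := by
    have h1 : Real.log (1 + ε / y ^ 2) ≤ Real.sqrt (ε / y ^ 2) :=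
      log_one_add_le_sqrt (by positivity)
    have h2 : Real.sqrt (ε / y ^ 2) = s / y := by
      rw [Real.sqrt_div hε0.le, Real.sqrt_sq hy0.le]
    linarith [h2 ▸ h1]
  have hA'0 : 0 ≤ y / ε := by positivity
  have hB'0 : 0 ≤ (-Real.log y) / L^2 := by positivity
  have hA0 : 0 ≤ y / (ε + y ^ 2) := by positivity
  have hB0 : 0 ≤ (-Real.log y) / (Real.log (ε + y ^ 2)) ^ 2 := by positivity
  have hC0 : 0 ≤ Real.log (1 + ε / y ^ 2) :=
    Real.log_nonneg (le_add_of_nonneg_right (by positivity))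
  have step1 : Fint ε y ≤ (y / ε) * ((-Real.log y) / L^2) * (s / y) :=
    mul_le_mul (mul_le_mul hA hB hB0 hA'0) hC hC0 (mul_nonneg hA'0 hB'0)
  have heq : (y / ε) * ((-Real.log y) / L^2) * (s / y) = (-Real.log y) / (s * L^2) := by
    rw [← hs2]; field_simp
  have hXy : -Real.log y ≤ -Real.log ε := by
    have := (Real.log_le_log_iff hε0 hy0).2 hεy.le; linarith
  have step2 : (-Real.log y) / (s * L^2) ≤ (-Real.log ε) / (s * L^2) := by
    gcongr
  rw [heq] at step1
  exact le_trans step1 step2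

private lemma bound_core34 {ε y : ℝ} (hε0 : 0 < ε)
    (hsy : Real.sqrt ε < y) (hy12 : y ≤ 1/2) :
    Fint ε y ≤ ε / (y^3 * (-Real.log y)) := by
  have hy0 : 0 < y := lt_of_le_of_lt (Real.sqrt_nonneg ε) hsy
  have hεy2 : ε < y ^ 2 := by
    nlinarith [Real.sq_sqrt hε0.le, Real.sqrt_pos.2 hε0]
  have hly : Real.log y < 0 := Real.log_neg hy0 (by linarith)
  have hnl0 : 0 < -Real.log y := by linarith
  have hl2 : Real.log y ≤ -Real.log 2 := by
    have h1 : Real.log y ≤ Real.log (1/2) := (Real.log_le_log_iff hy0 (by norm_num)).2 hy12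
    rw [show (1/2:ℝ) = 2⁻¹ by norm_num, Real.log_inv] at h1
    exact h1
  have hlog2 : (0.6931:ℝ) < Real.log 2 := by
    have := Real.log_two_gt_d9; linarith
  -- log (ε + y²) ≤ log (2 y²) = log 2 + 2 log y ≤ log y < 0
  have hup : Real.log (ε + y ^ 2) ≤ Real.log y := by
    have h1 : Real.log (ε + y ^ 2) ≤ Real.log (2 * y ^ 2) :=
      (Real.log_le_log_iff (by positivity) (by positivity)).2 (by nlinarith)
    have h2 : Real.log (2 * y ^ 2) = Real.log 2 + 2 * Real.log y := by
      rw [Real.log_mul two_ne_zero (by positivity), Real.log_pow]; norm_num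
    linarith
  have hLsq : (Real.log y) ^ 2 ≤ (Real.log (ε + y ^ 2)) ^ 2 := by nlinarith
  have hden : 0 < (Real.log y) ^ 2 := by nlinarith
  have hA : y / (ε + y ^ 2) ≤ y / y ^ 2 := by
    rw [div_le_div_iff₀ (by positivity) (by positivity)]
    nlinarith
  have hB : (-Real.log y) / (Real.log (ε + y ^ 2)) ^ 2
      ≤ (-Real.log y) / (Real.log y) ^ 2 := by
    have hden2 : 0 < (Real.log (ε + y ^ 2)) ^ 2 := by nlinarith
    rw [div_le_div_iff₀ hden2 hden]
    nlinarith [mul_le_mul_of_nonneg_left hLsq hnl0.le]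
  have hC : Real.log (1 + ε / y ^ 2) ≤ ε / y ^ 2 := by
    have := Real.log_le_sub_one_of_pos (show (0:ℝ) < 1 + ε / y ^ 2 by positivity)
    linarith
  have hA'0 : 0 ≤ y / y ^ 2 := by positivity
  have hB'0 : 0 ≤ (-Real.log y) / (Real.log y) ^ 2 := by positivity
  have hB0 : 0 ≤ (-Real.log y) / (Real.log (ε + y ^ 2)) ^ 2 := by positivity
  have hC0 : 0 ≤ Real.log (1 + ε / y ^ 2) :=
    Real.log_nonneg (le_add_of_nonneg_right (by positivity))
  have step1 : Fint ε y ≤ (y / y ^ 2) * ((-Real.log y) / (Real.log y) ^ 2) * (ε / y ^ 2) :=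
    mul_le_mul (mul_le_mul hA hB hB0 hA'0) hC hC0 (mul_nonneg hA'0 hB'0)
  have heq : (y / y ^ 2) * ((-Real.log y) / (Real.log y) ^ 2) * (ε / y ^ 2)
      = ε / (y^3 * (-Real.log y)) := by
    have hne : Real.log y ≠ 0 := ne_of_lt hly
    field_simp
  rw [heq] at step1
  exact step1

private lemma bound3 {ε y : ℝ} (hε0 : 0 < ε) (hε16 : ε ≤ 1/16)
    (hsy : Real.sqrt ε < y) (hyq : y ≤ Real.sqrt (Real.sqrt ε)) :
    Fint ε y ≤ (4 * ε / (-Real.log ε)) * (y^3)⁻¹ := by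
  obtain ⟨-, -, hX2⟩ := L_facts hε0 hε16
  have hs0 : 0 < Real.sqrt ε := Real.sqrt_pos.2 hε0
  have hy0 : 0 < y := lt_trans hs0 hsy
  have hq12 : Real.sqrt (Real.sqrt ε) ≤ 1/2 := by
    have h1 : Real.sqrt ε ≤ 1/4 := by
      have := Real.sqrt_le_sqrt hε16
      rwa [show (1/16:ℝ) = (1/4)^2 by norm_num, Real.sqrt_sq (by norm_num)] at this
    have := Real.sqrt_le_sqrt h1
    rwa [show (1/4:ℝ) = (1/2)^2 by norm_num, Real.sqrt_sq (by norm_num)] at this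
  have hy12 : y ≤ 1/2 := le_trans hyq hq12
  have hcore := bound_core34 hε0 hsy hy12
  have hlogq : Real.log (Real.sqrt (Real.sqrt ε)) = Real.log ε / 4 := by
    rw [Real.log_sqrt (Real.sqrt_nonneg ε), Real.log_sqrt hε0.le]; ring
  have hnly : (-Real.log ε) / 4 ≤ -Real.log y := by
    have h1 : Real.log y ≤ Real.log (Real.sqrt (Real.sqrt ε)) :=
      (Real.log_le_log_iff hy0 (Real.sqrt_pos.2 hs0)).2 hyq
    rw [hlogq] at h1; linarith
  have hnl0 : 0 < -Real.log y := by linarith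
  have heq : (4 * ε / (-Real.log ε)) * (y^3)⁻¹ = 4 * ε / ((-Real.log ε) * y^3) := by
    field_simp
  rw [heq]
  refine le_trans hcore ?_
  rw [div_le_div_iff₀ (by positivity) (by positivity)]
  nlinarith [pow_pos hy0 3, mul_le_mul_of_nonneg_left hnly (le_of_lt (pow_pos hy0 3)),
    mul_pos (pow_pos hy0 3) hnl0]

private lemma bound4 {ε y : ℝ} (hε0 : 0 < ε) (hε16 : ε ≤ 1/16)
    (hqy : Real.sqrt (Real.sqrt ε) < y) (hy12 : y ≤ 1/2) :
    Fint ε y ≤ (ε / Real.log 2) * (y^3)⁻¹ := by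
  have hs0 : 0 < Real.sqrt ε := Real.sqrt_pos.2 hε0
  have hq0 : 0 < Real.sqrt (Real.sqrt ε) := Real.sqrt_pos.2 hs0
  have hsq : Real.sqrt ε ≤ Real.sqrt (Real.sqrt ε) := by
    have hs1 : Real.sqrt ε ≤ 1 := by
      have := Real.sqrt_le_sqrt (show ε ≤ 1 by linarith)
      simpa using this
    nlinarith [Real.sq_sqrt hs0.le]
  have hy0 : 0 < y := lt_trans hq0 hqy
  have hcore := bound_core34 hε0 (lt_of_le_of_lt hsq hqy) hy12
  have hlog2 : (0.6931:ℝ) < Real.log 2 := by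
    have := Real.log_two_gt_d9; linarith
  have hl2 : Real.log 2 ≤ -Real.log y := by
    have h1 : Real.log y ≤ Real.log (1/2) := (Real.log_le_log_iff hy0 (by norm_num)).2 hy12
    rw [show (1/2:ℝ) = 2⁻¹ by norm_num, Real.log_inv] at h1
    linarith
  have heq : (ε / Real.log 2) * (y^3)⁻¹ = ε / (Real.log 2 * y^3) := by
    field_simp
  rw [heq]
  refine le_trans hcore ?_
  have hnly0 : 0 < -Real.log y := by linarith
  rw [div_le_div_iff₀ (by positivity) (by positivity)]
  nlinarith [pow_pos hy0 3, mul_le_mul_of_nonneg_left hl2 (le_of_lt (pow_pos hy0 3))]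

private lemma Fint_measurable (ε : ℝ) : Measurable (Fint ε) := by
  unfold Fint
  apply Measurable.mul
  apply Measurable.mul
  · exact measurable_id.div ((measurable_const.add (measurable_id.pow_const 2)))
  · exact (Real.measurable_log.comp measurable_id).neg.div
      (((Real.measurable_log.comp (measurable_const.add (measurable_id.pow_const 2)))).pow_const 2)
  · exact Real.measurable_log.comp (measurable_const.add
      (measurable_const.div (measurable_id.pow_const 2)))

private lemma Fint_integrableOn {ε a b M : ℝ} (hε0 : 0 < ε)
    (hab : Ioc a b ⊆ Ioc 0 (1/2)) (hM : ∀ y ∈ Ioc a b, Fint ε y ≤ M) :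
    IntegrableOn (Fint ε) (Ioc a b) := by
  apply Measure.integrableOn_of_bounded (M := M)
  · rw [Real.volume_Ioc]; exact ENNReal.ofReal_ne_top
  · exact (Fint_measurable ε).aestronglyMeasurable
  · rw [ae_restrict_iff' measurableSet_Ioc]
    filter_upwards with y hy
    have hy' := hab hy
    rw [Real.norm_eq_abs, abs_of_nonneg (Fint_nonneg hε0 hy'.1 (by linarith [hy'.2]))]
    exact hM y hy

private lemma zpow_neg3 (y : ℝ) : (y:ℝ) ^ (-3 : ℤ) = (y^3)⁻¹ := by
  rw [show (-3:ℤ) = -(3:ℕ) by norm_num, zpow_neg, zpow_natCast]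

private lemma integrableOn_inv_cube {a b : ℝ} (ha : 0 < a) (hab : a ≤ b) :
    IntegrableOn (fun y : ℝ => (y^3)⁻¹) (Ioc a b) := by
  have hb : 0 < b := lt_of_lt_of_le ha hab
  have h := (intervalIntegral.intervalIntegrable_zpow (μ := volume) (n := -3) (a := a) (b := b)
    (Or.inr (notMem_uIcc_of_lt ha hb)))
  rw [intervalIntegrable_iff_integrableOn_Ioc_of_le hab] at h
  exact h.congr_fun (fun y _ => zpow_neg3 y) measurableSet_Ioc

private lemma integral_inv_cube {a b : ℝ} (ha : 0 < a) (hab : a ≤ b) :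
    (∫ y in Ioc a b, (y^3)⁻¹) = ((a^2)⁻¹ - (b^2)⁻¹)/2 := by
  have hb : 0 < b := lt_of_lt_of_le ha hab
  rw [← intervalIntegral.integral_of_le hab]
  rw [show (fun y : ℝ => (y^3)⁻¹) = (fun y : ℝ => (y:ℝ) ^ (-3:ℤ)) from
    funext fun y => (zpow_neg3 y).symm]
  rw [integral_zpow (Or.inr ⟨by norm_num, notMem_uIcc_of_lt ha hb⟩)]
  rw [show (-3 + 1 : ℤ) = -(2:ℕ) by norm_num]
  rw [zpow_neg, zpow_natCast, zpow_neg, zpow_natCast]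
  push_cast
  field_simp
  ring

private lemma main_est {ε : ℝ} (hε0 : 0 < ε) (hε16 : ε ≤ 1/16) :
    (∫ y in Ioc (0:ℝ) (1/2), Fint ε y) ≤ 33 * Real.sqrt ε + 6 / (-Real.log ε) := by
  obtain ⟨hL1, hL2, hX2⟩ := L_facts hε0 hε16
  set X : ℝ := -Real.log ε with hXdef
  set L : ℝ := -Real.log (2*ε) with hLdef
  set s : ℝ := Real.sqrt ε with hsdef
  set q : ℝ := Real.sqrt s with hqdef
  have hX0 : 0 < X := by linarith
  have hL0 : 0 < L := by linarith
  have hs0 : 0 < s := Real.sqrt_pos.2 hε0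
  have hs2 : s ^ 2 = ε := Real.sq_sqrt hε0.le
  have hq0 : 0 < q := Real.sqrt_pos.2 hs0
  have hq2 : q ^ 2 = s := Real.sq_sqrt hs0.le
  have hs14 : s ≤ 1/4 := by
    have := Real.sqrt_le_sqrt hε16
    rwa [show (1/16:ℝ) = (1/4)^2 by norm_num, Real.sqrt_sq (by norm_num), ← hsdef] at this
  have hq12 : q ≤ 1/2 := by
    have := Real.sqrt_le_sqrt hs14
    rwa [show (1/4:ℝ) = (1/2)^2 by norm_num, Real.sqrt_sq (by norm_num), ← hqdef] at this
  have hεs : ε ≤ s := by nlinarith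
  have hsq : s ≤ q := by nlinarith
  have hs12 : s ≤ 1/2 := by linarith
  have hε12 : ε ≤ 1/2 := by linarith
  -- the four constants
  set M₁ : ℝ := 32 / (s * L^2) with hM₁
  set M₂ : ℝ := X / (s * L^2) with hM₂
  set c₃ : ℝ := 4 * ε / X with hc₃
  set c₄ : ℝ := ε / Real.log 2 with hc₄
  have hlog2 : (0.6931:ℝ) < Real.log 2 := by
    have := Real.log_two_gt_d9; linarith
  have hc₃0 : 0 ≤ c₃ := by positivity
  have hc₄0 : 0 ≤ c₄ := by rw [hc₄]; positivity
  -- pointwise bounds on the four regions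
  have hB1 : ∀ y ∈ Ioc (0:ℝ) ε, Fint ε y ≤ M₁ := fun y hy =>
    bound1 hε0 hε16 hy.1 hy.2
  have hB2 : ∀ y ∈ Ioc ε s, Fint ε y ≤ M₂ := fun y hy =>
    bound2 hε0 hε16 hy.1 hy.2
  have hB3 : ∀ y ∈ Ioc s q, Fint ε y ≤ c₃ * (y^3)⁻¹ := fun y hy =>
    bound3 hε0 hε16 hy.1 hy.2
  have hB4 : ∀ y ∈ Ioc q (1/2 : ℝ), Fint ε y ≤ c₄ * (y^3)⁻¹ := fun y hy =>
    bound4 hε0 hε16 hy.1 hy.2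
  -- integrability of Fint on the four regions
  have hI1 : IntegrableOn (Fint ε) (Ioc 0 ε) :=
    Fint_integrableOn hε0 (Ioc_subset_Ioc le_rfl hε12) hB1
  have hI2 : IntegrableOn (Fint ε) (Ioc ε s) :=
    Fint_integrableOn hε0 (Ioc_subset_Ioc hε0.le hs12) hB2
  have hI3 : IntegrableOn (Fint ε) (Ioc s q) := by
    apply Fint_integrableOn hε0 (Ioc_subset_Ioc hs0.le hq12) (M := c₃ * (s^3)⁻¹)
    intro y hy
    refine le_trans (hB3 y hy) ?_
    have hy0 : 0 < y := lt_trans hs0 hy.1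
    gcongr
    exact hy.1.le
  have hI4 : IntegrableOn (Fint ε) (Ioc q (1/2)) := by
    apply Fint_integrableOn hε0 (Ioc_subset_Ioc hq0.le le_rfl) (M := c₄ * (q^3)⁻¹)
    intro y hy
    refine le_trans (hB4 y hy) ?_
    have hy0 : 0 < y := lt_trans hq0 hy.1
    gcongr
    exact hy.1.le
  -- split the integral
  have hsp3 : (∫ y in Ioc s (1/2 : ℝ), Fint ε y)
      = (∫ y in Ioc s q, Fint ε y) + ∫ y in Ioc q (1/2 : ℝ), Fint ε y := by
    rw [← Ioc_union_Ioc_eq_Ioc hsq hq12,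
      setIntegral_union (Ioc_disjoint_Ioc_of_le le_rfl) measurableSet_Ioc hI3 hI4]
  have hI34 : IntegrableOn (Fint ε) (Ioc s (1/2)) := by
    rw [← Ioc_union_Ioc_eq_Ioc hsq hq12]; exact hI3.union hI4
  have hsp2 : (∫ y in Ioc ε (1/2 : ℝ), Fint ε y)
      = (∫ y in Ioc ε s, Fint ε y) + ∫ y in Ioc s (1/2 : ℝ), Fint ε y := by
    rw [← Ioc_union_Ioc_eq_Ioc hεs hs12,
      setIntegral_union (Ioc_disjoint_Ioc_of_le le_rfl) measurableSet_Ioc hI2 hI34]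
  have hI234 : IntegrableOn (Fint ε) (Ioc ε (1/2)) := by
    rw [← Ioc_union_Ioc_eq_Ioc hεs hs12]; exact hI2.union hI34
  have hsp1 : (∫ y in Ioc (0:ℝ) (1/2 : ℝ), Fint ε y)
      = (∫ y in Ioc (0:ℝ) ε, Fint ε y) + ∫ y in Ioc ε (1/2 : ℝ), Fint ε y := by
    rw [← Ioc_union_Ioc_eq_Ioc hε0.le hε12,
      setIntegral_union (Ioc_disjoint_Ioc_of_le le_rfl) measurableSet_Ioc hI1 hI234]
  -- estimate each piece
  have p1 : (∫ y in Ioc (0:ℝ) ε, Fint ε y) ≤ 32 * s := by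
    have h1 : (∫ y in Ioc (0:ℝ) ε, Fint ε y) ≤ ∫ _ in Ioc (0:ℝ) ε, M₁ :=
      setIntegral_mono_on hI1
        (integrableOn_const (by rw [Real.volume_Ioc]; exact ENNReal.ofReal_ne_top))
        measurableSet_Ioc hB1
    rw [setIntegral_const, Real.volume_real_Ioc_of_le (by linarith),
      smul_eq_mul] at h1
    refine le_trans h1 ?_
    have heq : (ε - 0) * M₁ = 32 * s / L^2 := by
      rw [hM₁, ← hs2]; field_simp; ring
    rw [heq]
    calc 32 * s / L^2 ≤ 32 * s / 1 := by
          apply div_le_div_of_nonneg_left (by positivity) (by norm_num) (by nlinarith)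
      _ = 32 * s := by ring
  have p2 : (∫ y in Ioc ε s, Fint ε y) ≤ 4 / X := by
    have h1 : (∫ y in Ioc ε s, Fint ε y) ≤ ∫ _ in Ioc ε s, M₂ :=
      setIntegral_mono_on hI2
        (integrableOn_const (by rw [Real.volume_Ioc]; exact ENNReal.ofReal_ne_top))
        measurableSet_Ioc hB2
    rw [setIntegral_const, Real.volume_real_Ioc_of_le (by linarith),
      smul_eq_mul] at h1
    refine le_trans h1 ?_
    have hM₂0 : 0 ≤ M₂ := by positivity
    have h2 : (s - ε) * M₂ ≤ s * M₂ := by nlinarith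
    have h3 : s * M₂ = X / L^2 := by rw [hM₂]; field_simp
    have h4 : X / L^2 ≤ 4 / X := by
      rw [div_le_div_iff₀ (by positivity) hX0]
      have h5 : (X/2) * (X/2) ≤ L * L :=
        mul_le_mul hL2 hL2 (by linarith) (by linarith)
      nlinarith [h5]
    linarith
  have p3 : (∫ y in Ioc s q, Fint ε y) ≤ 2 / X := by
    have hg3 : IntegrableOn (fun y : ℝ => c₃ * (y^3)⁻¹) (Ioc s q) :=
      (integrableOn_inv_cube hs0 hsq).const_mul c₃
    have h1 : (∫ y in Ioc s q, Fint ε y) ≤ ∫ y in Ioc s q, c₃ * (y^3)⁻¹ :=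
      setIntegral_mono_on hI3 hg3 measurableSet_Ioc hB3
    rw [MeasureTheory.integral_const_mul, integral_inv_cube hs0 hsq] at h1
    refine le_trans h1 ?_
    have h2 : ((s^2)⁻¹ - (q^2)⁻¹)/2 ≤ (s^2)⁻¹/2 := by
      have : 0 ≤ (q^2)⁻¹ := by positivity
      linarith
    have h3 : c₃ * ((s^2)⁻¹ - (q^2)⁻¹)/2 ≤ c₃ * ((s^2)⁻¹/2) := by
      rw [mul_div_assoc]
      exact mul_le_mul_of_nonneg_left h2 hc₃0
    have h4 : c₃ * ((s^2)⁻¹/2) = 2 / X := by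
      rw [hc₃, hs2]; field_simp; ring
    calc c₃ * (((s^2)⁻¹ - (q^2)⁻¹)/2) = c₃ * ((s^2)⁻¹ - (q^2)⁻¹)/2 := by ring
      _ ≤ c₃ * ((s^2)⁻¹/2) := h3
      _ = 2 / X := h4
  have p4 : (∫ y in Ioc q (1/2 : ℝ), Fint ε y) ≤ s := by
    have hg4 : IntegrableOn (fun y : ℝ => c₄ * (y^3)⁻¹) (Ioc q (1/2)) :=
      (integrableOn_inv_cube hq0 hq12).const_mul c₄
    have h1 : (∫ y in Ioc q (1/2:ℝ), Fint ε y) ≤ ∫ y in Ioc q (1/2:ℝ), c₄ * (y^3)⁻¹ :=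
      setIntegral_mono_on hI4 hg4 measurableSet_Ioc hB4
    rw [MeasureTheory.integral_const_mul, integral_inv_cube hq0 hq12] at h1
    refine le_trans h1 ?_
    have h2 : ((q^2)⁻¹ - ((1/2:ℝ)^2)⁻¹)/2 ≤ (q^2)⁻¹/2 := by
      have : (0:ℝ) ≤ ((1/2:ℝ)^2)⁻¹ := by norm_num
      linarith
    have h3 : c₄ * (((q^2)⁻¹ - ((1/2:ℝ)^2)⁻¹)/2) ≤ c₄ * ((q^2)⁻¹/2) :=
      mul_le_mul_of_nonneg_left h2 hc₄0
    have h4 : c₄ * ((q^2)⁻¹/2) = s / (2 * Real.log 2) := by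
      rw [hc₄, hq2, ← hs2]; field_simp
    have h5 : s / (2 * Real.log 2) ≤ s := by
      apply div_le_self hs0.le (by linarith)
    linarith
  rw [hsp1, hsp2, hsp3]
  have hdiv : 4/X + 2/X = 6/X := by rw [← add_div]; norm_num
  linarith

/-- A real-analysis limit from the proof of Lemma 5.8:
`∫₀^{1/2} (y/(ε+y²)) ((−log y)/(log(ε+y²))²) log(1+ε/y²) dy → 0` as `ε → 0+`. -/
theorem singular_log_integral_vanishes :
    Tendsto
      (fun ε : ℝ => ∫ y in Set.Ioc (0 : ℝ) (1 / 2),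
        (y / (ε + y ^ 2)) * ((-Real.log y) / (Real.log (ε + y ^ 2)) ^ 2)
          * Real.log (1 + ε / y ^ 2))
      (nhdsWithin 0 (Set.Ioi 0)) (nhds 0) := by
  have key : Tendsto (fun ε : ℝ => ∫ y in Ioc (0:ℝ) (1/2), Fint ε y)
      (𝓝[>] (0:ℝ)) (𝓝 0) := by
    have hU : Tendsto (fun ε : ℝ => 33 * Real.sqrt ε + 6 / (-Real.log ε))
        (𝓝[>] (0:ℝ)) (𝓝 0) := by
      have h1 : Tendsto (fun ε : ℝ => 33 * Real.sqrt ε) (𝓝[>] (0:ℝ)) (𝓝 0) := by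
        have h := ((Real.continuous_sqrt.tendsto' 0 0 (by simp)).const_mul (33:ℝ)).mono_left
          (nhdsWithin_le_nhds (s := Ioi (0:ℝ)))
        simpa using h
      have h2 : Tendsto (fun ε : ℝ => 6 / (-Real.log ε)) (𝓝[>] (0:ℝ)) (𝓝 0) := by
        have hl : Tendsto (fun ε : ℝ => -Real.log ε) (𝓝[>] (0:ℝ)) atTop :=
          tendsto_neg_atBot_atTop.comp Real.tendsto_log_nhdsGT_zero
        have := hl.inv_tendsto_atTop.const_mul (6:ℝ)
        simpa [div_eq_mul_inv] using this
      simpa using h1.add h2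
    refine tendsto_of_tendsto_of_tendsto_of_le_of_le' tendsto_const_nhds hU ?_ ?_
    · filter_upwards [self_mem_nhdsWithin] with ε hε
      exact setIntegral_nonneg measurableSet_Ioc fun y hy =>
        Fint_nonneg hε hy.1 (by linarith [hy.2])
    · filter_upwards [self_mem_nhdsWithin,
        nhdsWithin_le_nhds (gt_mem_nhds (show (0:ℝ) < 1/16 by norm_num))] with ε hε1 hε2
      exact main_est hε1 (le_of_lt hε2)
  exact key
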